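/- Let Ω ⊆ ℝ² be open and let λ : ℝ² → ℂ be continuously differentiable on Ω with Im λ > 0 and λ_x + λ·λ_y = 0 on Ω. Let z₀ ∈ Ω be a point where Φ(z₀) ≠ 0. Then there exists an open set V with z₀ ∈ V ⊆ Ω such that: for every function f : ℝ² → ℂ continuously differentiable on V, one has f_x + λ·f_y = 0 at every point of V if and only if there exists a function g : ℂ → ℂ that is complex-differentiable on the image ξ(V) (an open subset of ℂ) with f(x,y) = g(ξ(x,y)) for all (x,y) ∈ V. -/

import Mathlib

open Complex

noncomputable def pdx (f : ℝ × ℝ → ℂ) (p : ℝ × ℝ) : ℂ := fderiv ℝ f p (1, 0)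
noncomputable def pdy (f : ℝ × ℝ → ℂ) (p : ℝ × ℝ) : ℂ := fderiv ℝ f p (0, 1)

/-- The canonical coordinate `ξ(x,y) = y − λ(x,y)·x`. -/
noncomputable def xiC (lam : ℝ × ℝ → ℂ) (p : ℝ × ℝ) : ℂ := (p.2 : ℂ) - lam p * (p.1 : ℂ)

/-- The characteristic Jacobian. -/
noncomputable def Phi (lam : ℝ × ℝ → ℂ) (p : ℝ × ℝ) : ℂ :=
  (lam p - (starRingEnd ℂ) (lam p))
    - (p.1 : ℂ) * ((starRingEnd ℂ) (pdx lam p) + lam p * (starRingEnd ℂ) (pdy lam p))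

lemma clm_decomp (A : ℝ × ℝ →L[ℝ] ℂ) (v : ℝ × ℝ) :
    A v = v.1 • A (1, 0) + v.2 • A (0, 1) := by
  have hv : v = v.1 • ((1:ℝ), (0:ℝ)) + v.2 • ((0:ℝ), (1:ℝ)) := by
    simp [Prod.ext_iff]
  conv_lhs => rw [hv]
  rw [map_add, map_smul, map_smul]

lemma xi_fderiv (lam : ℝ × ℝ → ℂ) (p : ℝ × ℝ) (L : ℝ × ℝ →L[ℝ] ℂ)
    (hL : HasFDerivAt lam L p) :
    HasFDerivAt (xiC lam)
      (Complex.ofRealCLM.comp (ContinuousLinearMap.snd ℝ ℝ ℝ)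
        - (lam p • Complex.ofRealCLM.comp (ContinuousLinearMap.fst ℝ ℝ ℝ) + (p.1 : ℂ) • L)) p := by
  have h1 : HasFDerivAt (fun q : ℝ × ℝ => ((q.1 : ℝ) : ℂ))
      (Complex.ofRealCLM.comp (ContinuousLinearMap.fst ℝ ℝ ℝ)) p :=
    Complex.ofRealCLM.hasFDerivAt.comp p hasFDerivAt_fst
  have h2 : HasFDerivAt (fun q : ℝ × ℝ => ((q.2 : ℝ) : ℂ))
      (Complex.ofRealCLM.comp (ContinuousLinearMap.snd ℝ ℝ ℝ)) p :=
    Complex.ofRealCLM.hasFDerivAt.comp p hasFDerivAt_snd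
  exact h2.sub (hL.mul h1)

/-- General rigid holomorphic function, local form: near a point where
`Φ ≠ 0`, solutions of `f_x + λ f_y = 0` are exactly the functions `g ∘ ξ`
with `g` holomorphic on `ξ(V)`. -/
theorem stmt13
    (Ω : Set (ℝ × ℝ)) (hΩ : IsOpen Ω)
    (lam : ℝ × ℝ → ℂ)
    (hlam : ContDiffOn ℝ 1 lam Ω)
    (him : ∀ p ∈ Ω, 0 < (lam p).im)
    (hrigid : ∀ p ∈ Ω, pdx lam p + lam p * pdy lam p = 0)
    (z₀ : ℝ × ℝ) (hz₀ : z₀ ∈ Ω) (hΦ : Phi lam z₀ ≠ 0) :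
    ∃ V : Set (ℝ × ℝ), IsOpen V ∧ z₀ ∈ V ∧ V ⊆ Ω ∧
      IsOpen (xiC lam '' V) ∧
      ∀ f : ℝ × ℝ → ℂ, ContDiffOn ℝ 1 f V →
        ((∀ p ∈ V, pdx f p + lam p * pdy f p = 0) ↔
          (∃ g : ℂ → ℂ, DifferentiableOn ℂ g (xiC lam '' V) ∧
            ∀ p ∈ V, f p = g (xiC lam p))) := by
  classical
  set ξ := xiC lam with hξdef
  have hlamAt : ∀ p ∈ Ω, HasFDerivAt lam (fderiv ℝ lam p) p := fun p hp =>
    ((hlam.contDiffAt (hΩ.mem_nhds hp)).differentiableAt one_ne_zero).hasFDerivAt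
  have hξAt : ∀ p ∈ Ω, HasFDerivAt ξ (fderiv ℝ ξ p) p := fun p hp =>
    (xi_fderiv lam p _ (hlamAt p hp)).differentiableAt.hasFDerivAt
  have hξ10 : ∀ p ∈ Ω, fderiv ℝ ξ p (1, 0) = -(lam p) - (p.1 : ℂ) * fderiv ℝ lam p (1, 0) := by
    intro p hp
    rw [(xi_fderiv lam p _ (hlamAt p hp)).fderiv]
    simp [Complex.real_smul, smul_eq_mul]
    ring
  have hξ01 : ∀ p ∈ Ω, fderiv ℝ ξ p (0, 1) = 1 - (p.1 : ℂ) * fderiv ℝ lam p (0, 1) := by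
    intro p hp
    rw [(xi_fderiv lam p _ (hlamAt p hp)).fderiv]
    simp [Complex.real_smul, smul_eq_mul]
  have hr : ∀ p ∈ Ω, fderiv ℝ lam p (1, 0) = -(lam p) * fderiv ℝ lam p (0, 1) := by
    intro p hp
    have := hrigid p hp
    simp only [pdx, pdy] at this
    linear_combination this
  have hkey : ∀ p ∈ Ω, fderiv ℝ ξ p (1, 0) = -(lam p) * fderiv ℝ ξ p (0, 1) := by
    intro p hp
    rw [hξ10 p hp, hξ01 p hp, hr p hp]
    ring
  have hΦfact : Phi lam z₀ =
      (lam z₀ - (starRingEnd ℂ) (lam z₀)) * (starRingEnd ℂ) (fderiv ℝ ξ z₀ (0, 1)) := by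
    rw [hξ01 z₀ hz₀]
    simp only [Phi, pdx, pdy, map_sub, map_mul, map_one]
    rw [hr z₀ hz₀]
    simp only [map_mul, map_neg, Complex.conj_ofReal]
    ring
  have hc₀ : fderiv ℝ ξ z₀ (0, 1) ≠ 0 := by
    intro h0
    apply hΦ
    rw [hΦfact, h0, map_zero, mul_zero]
  -- bijectivity of the derivative at z₀
  set E₀ : ℝ × ℝ →L[ℝ] ℂ := fderiv ℝ ξ z₀ with hE₀def
  have hEfac : ∀ v : ℝ × ℝ, E₀ v = ((v.2 : ℂ) - lam z₀ * v.1) * E₀ (0, 1) := by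
    intro v
    rw [clm_decomp E₀ v]
    rw [show E₀ (1,0) = -(lam z₀) * E₀ (0,1) from hkey z₀ hz₀]
    simp [Complex.real_smul]
    ring
  have hinj : Function.Injective E₀ := by
    intro v w hvw
    have h0 : E₀ (v - w) = 0 := by rw [map_sub, hvw, sub_self]
    rw [hEfac] at h0
    have h2 : (((v - w).2 : ℝ) : ℂ) - lam z₀ * ((v - w).1 : ℝ) = 0 := by
      rcases mul_eq_zero.1 h0 with h | h
      · exact h
      · exact absurd h hc₀
    have him0 := him z₀ hz₀
    have hIm := congrArg Complex.im h2
    have hRe := congrArg Complex.re h2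
    simp [Complex.sub_im, Complex.sub_re, Complex.mul_im, Complex.mul_re] at hIm hRe
    have h1 : v.1 = w.1 := by
      rcases hIm with h | h
      · linarith
      · linarith
    have h1' : v.1 - w.1 = 0 := by linarith
    rw [h1', mul_zero] at hRe
    have h2' : v.2 = w.2 := by linarith
    exact Prod.ext h1 h2'
  have hsurj : Function.Surjective E₀ := by
    have hfr : Module.finrank ℝ (ℝ × ℝ) = Module.finrank ℝ ℂ := by
      simp [Module.finrank_prod, Complex.finrank_real_complex]
    exact (LinearMap.injective_iff_surjective_of_finrank_eq_finrank
      (f := E₀.toLinearMap) hfr).mp hinj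
  let eL : (ℝ × ℝ) ≃ₗ[ℝ] ℂ := LinearEquiv.ofBijective E₀.toLinearMap ⟨hinj, hsurj⟩
  let e : (ℝ × ℝ) ≃L[ℝ] ℂ := eL.toContinuousLinearEquiv
  have hecoe : (e : (ℝ × ℝ) →L[ℝ] ℂ) = E₀ := by
    refine ContinuousLinearMap.ext fun v => ?_
    rfl
  have hf' : HasFDerivAt ξ (e : (ℝ × ℝ) →L[ℝ] ℂ) z₀ := by
    rw [hecoe]; exact hξAt z₀ hz₀
  have hξCΩ : ContDiffOn ℝ 1 ξ Ω := by
    show ContDiffOn ℝ 1 (fun p : ℝ × ℝ => ((p.2 : ℝ) : ℂ) - lam p * ((p.1 : ℝ) : ℂ)) Ω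
    exact ((Complex.ofRealCLM.contDiff.comp contDiff_snd).contDiffOn).sub
      (hlam.mul (Complex.ofRealCLM.contDiff.comp contDiff_fst).contDiffOn)
  have hξCAt : ContDiffAt ℝ 1 ξ z₀ := hξCΩ.contDiffAt (hΩ.mem_nhds hz₀)
  set φ := hξCAt.toOpenPartialHomeomorph ξ hf' one_ne_zero with hφdef
  have hφcoe : ⇑φ = ξ := rfl
  have hsrc : z₀ ∈ φ.source := hξCAt.mem_toOpenPartialHomeomorph_source hf' one_ne_zero
  have hψC : ContDiffAt ℝ 1 (⇑φ.symm) (ξ z₀) := hξCAt.to_localInverse hf' one_ne_zero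
  obtain ⟨u, hu, hψu⟩ := hψC.contDiffOn le_rfl (by simp)
  set W := interior u with hWdef
  have hWopen : IsOpen W := isOpen_interior
  have hWmem : ξ z₀ ∈ W := mem_interior_iff_mem_nhds.2 hu
  set V : Set (ℝ × ℝ) := (Ω ∩ φ.source) ∩ ξ ⁻¹' W with hVdef
  have hVopen : IsOpen V := by
    apply ContinuousOn.isOpen_inter_preimage
      (hξCΩ.continuousOn.mono Set.inter_subset_left)
      (hΩ.inter φ.open_source) hWopen
  have hz₀V : z₀ ∈ V := ⟨⟨hz₀, hsrc⟩, hWmem⟩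
  have hVΩ : V ⊆ Ω := fun p hp => hp.1.1
  have hVsrc : V ⊆ φ.source := fun p hp => hp.1.2
  have hVW : V ⊆ ξ ⁻¹' W := fun p hp => hp.2
  have himg : ξ '' V = φ '' V := by rw [hφcoe]
  have himgopen : IsOpen (ξ '' V) := by
    rw [himg]; exact φ.isOpen_image_of_subset_source hVopen hVsrc
  have hleft : ∀ p ∈ V, φ.symm (ξ p) = p := fun p hp => φ.left_inv (hVsrc hp)
  have himgtgt : ξ '' V ⊆ φ.target := by
    rintro q ⟨p, hp, rfl⟩; exact φ.map_source (hVsrc hp)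
  have himgW : ξ '' V ⊆ W := by rintro q ⟨p, hp, rfl⟩; exact hVW hp
  refine ⟨V, hVopen, hz₀V, hVΩ, himgopen, ?_⟩
  intro f hf
  constructor
  · -- forward: PDE solution gives holomorphic g
    intro hpde
    refine ⟨f ∘ ⇑φ.symm, ?_, ?_⟩
    · rintro q ⟨p₀, hp₀, rfl⟩
      have hψq : φ.symm (ξ p₀) = p₀ := hleft p₀ hp₀
      -- derivative of ψ at q
      have hψd : HasFDerivAt (⇑φ.symm) (fderiv ℝ (⇑φ.symm) (ξ p₀)) (ξ p₀) := by
        have := (hψu.mono interior_subset).contDiffAt (hWopen.mem_nhds (hVW hp₀))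
        exact (this.differentiableAt one_ne_zero).hasFDerivAt
      set B := fderiv ℝ (⇑φ.symm) (ξ p₀) with hBdef
      -- derivative of f at p₀
      have hfd : HasFDerivAt f (fderiv ℝ f p₀) p₀ :=
        ((hf.contDiffAt (hVopen.mem_nhds hp₀)).differentiableAt one_ne_zero).hasFDerivAt
      set A := fderiv ℝ f p₀ with hAdef
      set E := fderiv ℝ ξ p₀ with hEdef
      have hEp := hξAt p₀ (hVΩ hp₀)
      -- B ∘ E = id
      have hBE : B.comp E = ContinuousLinearMap.id ℝ (ℝ × ℝ) := by
        have hcomp : HasFDerivAt (⇑φ.symm ∘ ξ) (B.comp E) p₀ := by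
          refine HasFDerivAt.comp p₀ ?_ hEp
          rw [← hψq] at hψd ⊢
          exact hψd
        have hev : (⇑φ.symm ∘ ξ) =ᶠ[nhds p₀] id :=
          Filter.eventuallyEq_of_mem (hVopen.mem_nhds hp₀) (fun p hp => hleft p hp)
        exact (hcomp.congr_of_eventuallyEq hev.symm).unique (hasFDerivAt_id p₀)
      -- E ∘ B = id
      have hEB : E.comp B = ContinuousLinearMap.id ℝ ℂ := by
        have hcomp : HasFDerivAt (ξ ∘ ⇑φ.symm) (E.comp B) (ξ p₀) := by
          refine HasFDerivAt.comp (ξ p₀) ?_ hψd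
          rw [hψq]; exact hEp
        have hev : (ξ ∘ ⇑φ.symm) =ᶠ[nhds (ξ p₀)] id := by
          refine Filter.eventuallyEq_of_mem (φ.open_target.mem_nhds (himgtgt ⟨p₀, hp₀, rfl⟩)) ?_
          intro q hq
          exact φ.right_inv hq
        exact (hcomp.congr_of_eventuallyEq hev.symm).unique (hasFDerivAt_id (ξ p₀))
      -- E(0,1) ≠ 0
      have hE01 : E (0, 1) ≠ 0 := by
        intro h0
        have hE10 : E (1, 0) = 0 := by rw [hkey p₀ (hVΩ hp₀), h0, mul_zero]
        have : (1 : ℂ) = 0 := by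
          have h1 := congrArg (fun (T : ℂ →L[ℝ] ℂ) => T 1) hEB
          simp only [ContinuousLinearMap.comp_apply, ContinuousLinearMap.id_apply] at h1
          rw [← h1, clm_decomp E (B 1), hE10, h0]
          simp
        exact one_ne_zero this
      -- the PDE at p₀
      have hA10 : A (1, 0) = -(lam p₀) * A (0, 1) := by
        have := hpde p₀ hp₀
        simp only [pdx, pdy, ← hAdef] at this
        linear_combination this
      -- g has complex-linear derivative
      set m : ℂ := A (0, 1) / E (0, 1) with hmdef
      have hgd : HasFDerivAt (f ∘ ⇑φ.symm) (A.comp B) (ξ p₀) := by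
        refine HasFDerivAt.comp (ξ p₀) ?_ hψd
        rw [hψq]; exact hfd
      have hrs : (m • ContinuousLinearMap.id ℂ ℂ).restrictScalars ℝ = A.comp B := by
        ext w
        simp only [ContinuousLinearMap.coe_restrictScalars', ContinuousLinearMap.smul_apply,
          ContinuousLinearMap.id_apply, ContinuousLinearMap.comp_apply, smul_eq_mul]
        have hw : E (B w) = w := by
          have h1 := congrArg (fun (T : ℂ →L[ℝ] ℂ) => T w) hEB
          simpa using h1
        set v := B w with hvdef
        have hAv : A v = A (0, 1) * ((v.2 : ℂ) - lam p₀ * v.1) := by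
          rw [clm_decomp A v, hA10]; simp [Complex.real_smul]; ring
        have hEv : E (0, 1) * ((v.2 : ℂ) - lam p₀ * v.1) = w := by
          rw [← hw, clm_decomp E v, hkey p₀ (hVΩ hp₀)]
          simp [Complex.real_smul]; ring
        rw [hAv, hmdef, ← hEv]
        field_simp
      have : HasFDerivAt (f ∘ ⇑φ.symm) (m • ContinuousLinearMap.id ℂ ℂ) (ξ p₀) :=
        hasFDerivAt_of_restrictScalars ℝ hgd hrs
      exact this.differentiableAt.differentiableWithinAt
    · intro p hp
      simp [Function.comp, hleft p hp]
  · -- reverse: g ∘ ξ solves the PDE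
    rintro ⟨g, hg, heq⟩ p hp
    have hgd : DifferentiableAt ℂ g (ξ p) :=
      hg.differentiableAt (himgopen.mem_nhds ⟨p, hp, rfl⟩)
    set G := fderiv ℂ g (ξ p) with hGdef
    have hG : HasFDerivAt g (G.restrictScalars ℝ) (ξ p) := hgd.hasFDerivAt.restrictScalars ℝ
    have hEp := hξAt p (hVΩ hp)
    have hcomp : HasFDerivAt (g ∘ ξ) ((G.restrictScalars ℝ).comp (fderiv ℝ ξ p)) p :=
      hG.comp p hEp
    have hfe : f =ᶠ[nhds p] g ∘ ξ :=
      Filter.eventuallyEq_of_mem (hVopen.mem_nhds hp) (fun q hq => heq q hq)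
    have hfd : HasFDerivAt f ((G.restrictScalars ℝ).comp (fderiv ℝ ξ p)) p :=
      hcomp.congr_of_eventuallyEq hfe
    have hfderiv := hfd.fderiv
    simp only [pdx, pdy, hfderiv, ContinuousLinearMap.comp_apply,
      ContinuousLinearMap.coe_restrictScalars']
    rw [hkey p (hVΩ hp)]
    rw [show -(lam p) * fderiv ℝ ξ p (0, 1) = (-(lam p)) • fderiv ℝ ξ p (0, 1) from rfl]
    rw [map_smul, smul_eq_mul]
    ring
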